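/- Let w be a weight structure on a triangulated category C and t a t-structure on a triangulated category C' ⊇ C such that t is right orthogonal to w in C' (Hom(C_{w≤0}, C'_{t≥1}) = 0 and Hom(C_{w≥0}, C'_{t≤-1}) = 0) and the heart of t is contained in the objects of C. Then for every object M of the heart of t there exists P ∈ C_{w=0} and a morphism P → M inducing an epimorphism H^t_0(P) → M in the heart of t; consequently the heart of t has enough projectives. -/

import Mathlib

open CategoryTheory Category Limits Pretriangulated ZeroObject Opposite

universe v u u₂ v₂

variable (C : Type u) [Category.{v} C] [Preadditive C] [HasZeroObject C]
  [HasShift C ℤ] [∀ n : ℤ, (CategoryTheory.shiftFunctor C n).Additive] [Pretriangulated C]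

/-- `X` is a retract (direct summand) of `Y`. -/
def IsRetract {C : Type u} [Category.{v} C] (X Y : C) : Prop :=
  ∃ (s : X ⟶ Y) (r : Y ⟶ X), s ≫ r = 𝟙 X

/-- A weight structure on a pretriangulated category `C`, in the homological convention:
`le` is the class `C_{w≤0}` and `ge` is the class `C_{w≥0}`. -/
structure WeightStructure where
  le : Set C
  ge : Set C
  le_retract : ∀ ⦃X Y : C⦄, IsRetract X Y → Y ∈ le → X ∈ le
  ge_retract : ∀ ⦃X Y : C⦄, IsRetract X Y → Y ∈ ge → X ∈ ge
  le_shift : ∀ X : C, X ∈ le → X⟦(-1 : ℤ)⟧ ∈ le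
  ge_shift : ∀ X : C, X ∈ ge → X⟦(1 : ℤ)⟧ ∈ ge
  orth : ∀ ⦃X Y : C⦄, X ∈ le → Y ∈ ge → ∀ f : X ⟶ Y⟦(1 : ℤ)⟧, f = 0
  decomp : ∀ M : C, ∃ (L R : C) (f : L ⟶ M) (g : M ⟶ R) (h : R ⟶ L⟦(1 : ℤ)⟧),
    Triangle.mk f g h ∈ (distTriang C) ∧ L ∈ le ∧ R⟦(-1 : ℤ)⟧ ∈ ge

/-- A t-structure on a pretriangulated category `C`, in the homological convention:
`le` is the class `C_{t≤0}` and `ge` is the class `C_{t≥0}`. -/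
structure HomTStructure where
  le : Set C
  ge : Set C
  le_iso : ∀ ⦃X Y : C⦄, (X ≅ Y) → Y ∈ le → X ∈ le
  ge_iso : ∀ ⦃X Y : C⦄, (X ≅ Y) → Y ∈ ge → X ∈ ge
  le_shift : ∀ X : C, X ∈ le → X⟦(-1 : ℤ)⟧ ∈ le
  ge_shift : ∀ X : C, X ∈ ge → X⟦(1 : ℤ)⟧ ∈ ge
  orth : ∀ ⦃X Y : C⦄, X⟦(-1 : ℤ)⟧ ∈ ge → Y ∈ le → ∀ f : X ⟶ Y, f = 0
  decomp : ∀ M : C, ∃ (L R : C) (f : L ⟶ M) (g : M ⟶ R) (h : R ⟶ L⟦(1 : ℤ)⟧),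
    Triangle.mk f g h ∈ (distTriang C) ∧ L ∈ ge ∧ R⟦(1 : ℤ)⟧ ∈ le

/-- A contravariant additive functor is cohomological if it sends distinguished
triangles to exact sequences. -/
def IsCohomological {A : Type u₂} [Category.{v₂} A] [Abelian A]
    (H : Cᵒᵖ ⥤ A) [H.Additive] : Prop :=
  ∀ (T : Triangle C), ∀ hT : T ∈ distTriang C,
    (ShortComplex.mk (H.map T.mor₂.op) (H.map T.mor₁.op) (by
      rw [← H.map_comp, ← op_comp, comp_distTriang_mor_zero₁₂ _ hT, op_zero, H.map_zero])).Exact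

universe u₃

variable {C' : Type u₃} [Category.{v} C'] [Preadditive C'] [HasZeroObject C']
  [HasShift C' ℤ] [∀ n : ℤ, (CategoryTheory.shiftFunctor C' n).Additive] [Pretriangulated C']


namespace HomTStructure

variable (t : HomTStructure C')

lemma le_down {X : C'} (h : X⟦(1:ℤ)⟧ ∈ t.le) : X ∈ t.le :=
  t.le_iso (shiftShiftNeg X (1:ℤ)).symm (t.le_shift _ h)

lemma ge_up {X : C'} (h : X⟦(-1:ℤ)⟧ ∈ t.ge) : X ∈ t.ge :=
  t.ge_iso (shiftNegShift X (1:ℤ)).symm (t.ge_shift _ h)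

lemma orth' {X Y : C'} (hX : X ∈ t.ge) (hY : Y⟦(1:ℤ)⟧ ∈ t.le) (f : X ⟶ Y) : f = 0 := by
  have : (shiftFunctor C' (1:ℤ)).map f = 0 :=
    t.orth (t.ge_iso (shiftShiftNeg X (1:ℤ)) hX) hY _
  exact (shiftFunctor C' (1:ℤ)).map_injective (by simpa using this)

lemma ge_of_orth {Z : C'} (h : ∀ Y : C', Y⟦(1:ℤ)⟧ ∈ t.le → ∀ f : Z ⟶ Y, f = 0) :
    Z ∈ t.ge := by
  obtain ⟨L, R, f, g, m, hT, hL, hR⟩ := t.decomp Z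
  have hg : g = 0 := h R hR g
  obtain ⟨p, hp⟩ := Triangle.yoneda_exact₃ _ hT (𝟙 R) (by rw [hg]; exact zero_comp)
  have hp0 : p = 0 := t.orth (t.ge_iso (shiftShiftNeg L (1:ℤ)) hL) (t.le_down hR) p
  have hzero : IsZero R := (IsZero.iff_id_eq_zero R).2 (by rw [hp, hp0]; exact comp_zero)
  have : IsIso f := (Triangle.isZero₃_iff_isIso₁ _ hT).1 hzero
  exact t.ge_iso (asIso f).symm hL

lemma le_of_orth {W : C'} (h : ∀ X : C', X⟦(-1:ℤ)⟧ ∈ t.ge → ∀ f : X ⟶ W, f = 0) :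
    W ∈ t.le := by
  obtain ⟨L, R, f, g, m, hT, hL, hR⟩ := t.decomp (W⟦(-1:ℤ)⟧)
  have hf : f = 0 := by
    have h1 : (shiftFunctor C' (1:ℤ)).map f ≫ (shiftNegShift W (1:ℤ)).hom = 0 :=
      h (L⟦(1:ℤ)⟧) (t.ge_iso (shiftShiftNeg L (1:ℤ)) hL) _
    exact (shiftFunctor C' (1:ℤ)).map_injective (by
      have := h1 =≫ (shiftNegShift W (1:ℤ)).inv
      simpa using (cancel_mono (shiftNegShift W (1:ℤ)).hom).1 (h1.trans zero_comp.symm))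
  set T' := (Triangle.shiftFunctor C' (1:ℤ)).obj (Triangle.mk f g m) with hT'
  have hT'dist : T' ∈ distTriang C' := Triangle.shift_distinguished _ hT 1
  have hmor₁ : T'.mor₁ = 0 := by
    dsimp [T', Triangle.shiftFunctor]
    rw [hf]
    simp
    exact neg_eq_zero.mpr ((shiftFunctor C' (1:ℤ)).map_zero _ _)
  obtain ⟨s, hs⟩ := Triangle.coyoneda_exact₁ _ hT'dist (𝟙 (T'.obj₁⟦(1:ℤ)⟧))
    (by rw [hmor₁]; simp)
  have hs0 : s = 0 := by
    refine t.orth ?_ ?_ s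
    · exact t.ge_iso (shiftShiftNeg (L⟦(1:ℤ)⟧) (1:ℤ)) (t.ge_shift L hL)
    · exact hR
  have hzero : IsZero (T'.obj₁⟦(1:ℤ)⟧) :=
    (IsZero.iff_id_eq_zero _).2 (by rw [hs, hs0, zero_comp])
  have : IsIso T'.mor₂ :=
    (Triangle.isZero₃_iff_isIso₁ T'.rotate (rot_of_distTriang _ hT'dist)).1 hzero
  exact t.le_iso ((shiftNegShift W (1:ℤ)).symm ≪≫ @asIso _ _ _ _ T'.mor₂ this) hR

end HomTStructure

/-- If t (on C') is right orthogonal to w (on the full triangulated subcategory C of C')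
and the heart of t consists of objects of C, then every object M of the heart of t admits
P ∈ C_{w=0} and a morphism i(P) ⟶ M factoring through its zeroth t-homology
H^t_0(i P) = R and inducing an epimorphism R ⟶ M in the heart; moreover R is projective
in the heart, so the heart of t has enough projectives. -/
theorem heart_has_enough_projectives
    (i : C ⥤ C') [i.Full] [i.Faithful] [i.CommShift ℤ] [i.IsTriangulated]
    (w : WeightStructure C) (t : HomTStructure C')
    (h₁ : ∀ X ∈ w.le, ∀ N : C', N⟦(-1 : ℤ)⟧ ∈ t.ge → ∀ f : i.obj X ⟶ N, f = 0)
    (h₂ : ∀ X ∈ w.ge, ∀ N : C', N⟦(1 : ℤ)⟧ ∈ t.le → ∀ f : i.obj X ⟶ N, f = 0)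
    (hheart : ∀ Y : C', Y ∈ t.le → Y ∈ t.ge → ∃ X : C, Nonempty (i.obj X ≅ Y))
    (M : C') (hM : M ∈ t.le ∧ M ∈ t.ge) :
    ∃ P : C, P ∈ w.le ∧ P ∈ w.ge ∧
      ∃ (L R : C') (a : L ⟶ i.obj P) (b : i.obj P ⟶ R) (c : R ⟶ L⟦(1 : ℤ)⟧),
        Triangle.mk a b c ∈ (distTriang C') ∧ L⟦(-1 : ℤ)⟧ ∈ t.ge ∧
        R ∈ t.le ∧ R ∈ t.ge ∧
        ∃ q : R ⟶ M,
          -- q : H^t_0(i P) ⟶ M is an epimorphism in the heart of t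
          (∀ T : C', T ∈ t.le → T ∈ t.ge → ∀ u : M ⟶ T, q ≫ u = 0 → u = 0) ∧
          -- R = H^t_0(i P) is a projective object of the heart of t
          (∀ X Y : C', X ∈ t.le → X ∈ t.ge → Y ∈ t.le → Y ∈ t.ge →
            ∀ ep : X ⟶ Y,
              (∀ T : C', T ∈ t.le → T ∈ t.ge → ∀ u : Y ⟶ T, ep ≫ u = 0 → u = 0) →
              ∀ v : R ⟶ Y, ∃ l : R ⟶ X, l ≫ ep = v) := by
  obtain ⟨hMle, hMge⟩ := hM
  obtain ⟨M₀, ⟨e⟩⟩ := hheart M hMle hMge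
  obtain ⟨A, B, f, g, m, hTw, hA, hB⟩ := w.decomp M₀
  have hiTw := i.map_distinguished _ hTw
  -- any map out of `(i.obj B)⟦-1⟧` to an object of `t_{≤ -1}` vanishes
  have zB : ∀ (Y : C') (_ : Y⟦(1:ℤ)⟧ ∈ t.le) (φ : (i.obj B)⟦(-1:ℤ)⟧ ⟶ Y), φ = 0 := by
    intro Y hY φ
    have h0 : ((i.commShiftIso (-1:ℤ)).app B).hom ≫ φ = 0 := h₂ _ hB Y hY _
    calc φ = ((i.commShiftIso (-1:ℤ)).app B).inv ≫
        (((i.commShiftIso (-1:ℤ)).app B).hom ≫ φ) := by simp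
      _ = 0 := by rw [h0, comp_zero]
  -- `i.obj A ∈ t.ge`
  have hiA : i.obj A ∈ t.ge := by
    apply t.ge_of_orth
    intro Y hY ψ
    obtain ⟨χ, hχ⟩ := Triangle.yoneda_exact₂ _ (inv_rot_of_distTriang _ hiTw) ψ (zB Y hY _)
    have h5 : e.inv ≫ χ = 0 := t.orth' hMge hY _
    have hχ0 : χ = 0 := by
      exact (e.hom_inv_id_assoc χ).symm.trans ((_ ≫= h5).trans comp_zero)
    rw [hχ, hχ0]; exact comp_zero
  -- `A ∈ w.ge`
  have hAge : A ∈ w.ge := by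
    obtain ⟨L', R', f', g', m', hT', hL', hR'⟩ := w.decomp (A⟦(1:ℤ)⟧)
    have hf' : f' = 0 := by
      have h5 : (i.obj (A⟦(1:ℤ)⟧))⟦(-1:ℤ)⟧ ∈ t.ge :=
        t.ge_iso ((shiftFunctor C' (-1:ℤ)).mapIso ((i.commShiftIso (1:ℤ)).app A) ≪≫
          shiftShiftNeg (i.obj A) (1:ℤ)) hiA
      have h4 : i.map f' = 0 := h₁ _ hL' _ h5 _
      exact i.map_injective (by rw [h4, Functor.map_zero])
    set T'' := (Triangle.shiftFunctor C (-1:ℤ)).obj (Triangle.mk f' g' m') with hT''def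
    have hT''dist : T'' ∈ distTriang C := Triangle.shift_distinguished _ hT' (-1)
    have hmor : T''.mor₁ = 0 := by
      dsimp [T'', Triangle.shiftFunctor]
      rw [hf']
      simp
      exact neg_eq_zero.mpr ((shiftFunctor C (-1:ℤ)).map_zero _ _)
    obtain ⟨r, hr⟩ := Triangle.yoneda_exact₂ _ hT''dist (𝟙 T''.obj₂) (by rw [hmor]; simp)
    refine w.ge_retract ⟨(shiftShiftNeg A (1:ℤ)).inv ≫ T''.mor₂,
      r ≫ (shiftShiftNeg A (1:ℤ)).hom, ?_⟩ hR'
    erw [assoc, ← assoc T''.mor₂ r, ← hr, id_comp, Iso.inv_hom_id]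
  -- the truncation triangle of `i.obj A`
  obtain ⟨L₀, R₀, a₀, b₀, c₀, hTt, hL₀, hR₀⟩ := t.decomp ((i.obj A)⟦(-1:ℤ)⟧)
  set Tt := (Triangle.shiftFunctor C' (1:ℤ)).obj (Triangle.mk a₀ b₀ c₀) with hTtdef
  have hTtdist : Tt ∈ distTriang C' := Triangle.shift_distinguished _ hTt 1
  set ε : ((i.obj A)⟦(-1:ℤ)⟧)⟦(1:ℤ)⟧ ≅ i.obj A := shiftNegShift (i.obj A) (1:ℤ) with hε
  set a : L₀⟦(1:ℤ)⟧ ⟶ i.obj A := Tt.mor₁ ≫ ε.hom with ha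
  set b : i.obj A ⟶ R₀⟦(1:ℤ)⟧ := ε.inv ≫ Tt.mor₂ with hb
  set c : R₀⟦(1:ℤ)⟧ ⟶ (L₀⟦(1:ℤ)⟧)⟦(1:ℤ)⟧ := Tt.mor₃ with hc
  have hTm : Triangle.mk a b c ∈ distTriang C' := by
    refine isomorphic_distinguished _ hTtdist _ ?_
    exact Triangle.isoMk _ _ (Iso.refl _) ε.symm (Iso.refl _)
      (by simp [ha]; exact (assoc _ _ _).trans ((Tt.mor₁ ≫= ε.hom_inv_id).trans ((comp_id _).trans (id_comp _).symm)))
        (by simp [hb]; exact comp_id _)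
        (by simp [hc]; exact (Tt.mor₃ ≫= (shiftFunctor C' (1:ℤ)).map_id _).trans ((comp_id _).trans (id_comp _).symm))
  have hLge : (L₀⟦(1:ℤ)⟧)⟦(-1:ℤ)⟧ ∈ t.ge := t.ge_iso (shiftShiftNeg L₀ (1:ℤ)) hL₀
  have za : ∀ (Y : C') (_ : Y ∈ t.le) (φ : L₀⟦(1:ℤ)⟧ ⟶ Y), φ = 0 :=
    fun Y hY φ => t.orth hLge hY φ
  have zc : ∀ (Y : C') (_ : Y ∈ t.le) (φ : (L₀⟦(1:ℤ)⟧)⟦(1:ℤ)⟧ ⟶ Y), φ = 0 :=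
    fun Y hY φ =>
      t.orth (t.ge_iso (shiftShiftNeg (L₀⟦(1:ℤ)⟧) (1:ℤ)) (t.ge_shift _ hL₀)) hY φ
  have ziP : ∀ (Y : C') (_ : Y⟦(1:ℤ)⟧ ∈ t.le) (φ : i.obj A ⟶ Y), φ = 0 :=
    fun Y hY φ => h₂ A hAge Y hY φ
  have hRge : R₀⟦(1:ℤ)⟧ ∈ t.ge := by
    apply t.ge_of_orth
    intro Y hY φ
    obtain ⟨g₁, hg₁⟩ := Triangle.yoneda_exact₂ _ (rot_of_distTriang _ hTm) φ (ziP Y hY _)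
    rw [hg₁, zc Y (t.le_down hY) g₁]; exact comp_zero
  set mm : i.obj A ⟶ M := i.map f ≫ e.hom with hmm
  have ham : a ≫ mm = 0 := za M hMle _
  obtain ⟨q, hq⟩ := Triangle.yoneda_exact₂ _ hTm mm ham
  refine ⟨A, hA, hAge, L₀⟦(1:ℤ)⟧, R₀⟦(1:ℤ)⟧, a, b, c, hTm, hLge, hR₀, hRge, q, ?_, ?_⟩
  · -- q is an epimorphism in the heart
    intro T hTle hTge u hu
    have h3 : i.map f ≫ (e.hom ≫ u) = 0 := by
      have h6 : mm ≫ u = 0 := by rw [hq]; exact (assoc _ _ _).trans ((_ ≫= hu).trans comp_zero)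
      rw [← assoc]
      simpa [hmm] using h6
    obtain ⟨v, hv⟩ := Triangle.yoneda_exact₂ _ hiTw (e.hom ≫ u) h3
    have hv0 : v = 0 := by
      have hz : ((i.commShiftIso (-1:ℤ)).app B).hom ≫ (shiftFunctor C' (-1:ℤ)).map v = 0 :=
        h₂ _ hB _ (t.le_iso (shiftNegShift T (1:ℤ)) hTle) _
      have h7 : (shiftFunctor C' (-1:ℤ)).map v = 0 := by
        exact (Iso.inv_hom_id_assoc ((i.commShiftIso (-1:ℤ)).app B) _).symm.trans
          ((_ ≫= hz).trans comp_zero)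
      exact (shiftFunctor C' (-1:ℤ)).map_injective (by simpa using h7)
    have h8 : e.hom ≫ u = 0 := by exact hv.trans (by rw [hv0]; exact comp_zero)
    calc u = e.inv ≫ (e.hom ≫ u) := by simp
      _ = 0 := by rw [h8, comp_zero]
  · -- R is projective in the heart
    intro X Y hXle hXge hYle hYge ep hep v
    obtain ⟨Z, cm, dm, hTz⟩ := distinguished_cocone_triangle ep
    have hZheart : ∀ (V : C') (_ : V ∈ t.le) (_ : V ∈ t.ge) (χ : Z ⟶ V), χ = 0 := by
      intro V hVle hVge χ
      have h00 : ep ≫ cm = 0 := comp_distTriang_mor_zero₁₂ _ hTz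
      have h0 : cm ≫ χ = 0 := by
        refine hep V hVle hVge _ ?_
        rw [← assoc, h00, zero_comp]
      obtain ⟨g₂, hg₂⟩ := Triangle.yoneda_exact₂ _ (rot_of_distTriang _ hTz) χ h0
      have h9 : g₂ = 0 := t.orth (t.ge_iso (shiftShiftNeg X (1:ℤ)) hXge) hVle g₂
      rw [hg₂, h9]; exact comp_zero
    have hZ : ∀ (V : C') (_ : V ∈ t.le) (χ : Z ⟶ V), χ = 0 := by
      intro V hVle χ
      obtain ⟨V₁, V₂, α, β, γ, hTv, hV₁, hV₂⟩ := t.decomp V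
      have hV₁le : V₁ ∈ t.le := by
        apply t.le_of_orth
        intro S hS ξ
        have h1 : ξ ≫ α = 0 := t.orth hS hVle _
        obtain ⟨ζ, hζ⟩ := Triangle.coyoneda_exact₂ _ (inv_rot_of_distTriang _ hTv) ξ h1
        have h10 : ζ = 0 := t.orth hS (t.le_shift _ (t.le_down hV₂)) ζ
        rw [hζ, h10]; exact zero_comp
      have h2 : χ ≫ β = 0 := by
        obtain ⟨g₃, hg₃⟩ := Triangle.yoneda_exact₂ _ (rot_of_distTriang _ hTz) (χ ≫ β)
          (t.orth' hYge hV₂ _)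
        have h11 : g₃ = 0 :=
          t.orth (t.ge_iso (shiftShiftNeg X (1:ℤ)) hXge) (t.le_down hV₂) g₃
        exact hg₃.trans (by rw [h11]; exact comp_zero)
      obtain ⟨κ, hκ⟩ := Triangle.coyoneda_exact₂ _ hTv χ h2
      rw [hκ, hZheart V₁ hV₁le hV₁ κ]; exact zero_comp
    have hZge : Z⟦(-1:ℤ)⟧ ∈ t.ge := by
      apply t.ge_of_orth
      intro W hW ψ
      have hχ : (shiftNegShift Z (1:ℤ)).inv ≫ (shiftFunctor C' (1:ℤ)).map ψ = 0 :=
        hZ _ hW _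
      have h12 : (shiftFunctor C' (1:ℤ)).map ψ = 0 := by
        calc (shiftFunctor C' (1:ℤ)).map ψ
            = (shiftNegShift Z (1:ℤ)).hom ≫
              ((shiftNegShift Z (1:ℤ)).inv ≫ (shiftFunctor C' (1:ℤ)).map ψ) := by simp
          _ = 0 := by rw [hχ, comp_zero]
      exact (shiftFunctor C' (1:ℤ)).map_injective (by simpa using h12)
    have hφc : (b ≫ v) ≫ cm = 0 := h₁ A hA Z hZge _
    obtain ⟨l₀, hl₀⟩ := Triangle.coyoneda_exact₂ _ hTz (b ≫ v) hφc
    obtain ⟨l', hl⟩ := Triangle.yoneda_exact₂ _ hTm l₀ (za X hXle _)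
    set l : R₀⟦(1:ℤ)⟧ ⟶ X := l' with hldef
    refine ⟨l, ?_⟩
    have hl2 : l₀ = b ≫ l := hl
    have hl₀2 : b ≫ v = l₀ ≫ ep := hl₀
    have hd : b ≫ (l ≫ ep - v) = 0 := by
      rw [Preadditive.comp_sub, ← assoc, ← hl2]; exact sub_eq_zero.mpr hl₀2.symm
    obtain ⟨g₄, hg₄⟩ := Triangle.yoneda_exact₂ _ (rot_of_distTriang _ hTm) (l ≫ ep - v) hd
    have h13 : g₄ = 0 := zc Y hYle g₄
    have hz : l ≫ ep - v = 0 := by rw [hg₄, h13]; exact comp_zero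
    exact sub_eq_zero.mp hz
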